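/- The Veselova vector field has the invariant measure ĝ dx dM with density ĝ(x) = (x,Âx)^{1/2}: on the open set {(x,M) ∈ ℝ^6 : (x,Âx) > 0}, Σ_{i=1}^3 [ ∂/∂x_i ( ĝ(x) (x × ω)_i ) + ∂/∂M_i ( ĝ(x) (M × ω + λx)_i ) ] = 0 identically. -/

import Mathlib

open scoped BigOperators

noncomputable section

abbrev Pt3 : Type := (Fin 3 → ℝ) × (Fin 3 → ℝ)

/-- Euclidean scalar product on ℝ³ -/
def dot (a b : Fin 3 → ℝ) : ℝ := ∑ i, a i * b i

/-- totally antisymmetric Levi-Civita symbol on `Fin 3` -/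
def eps (i j k : Fin 3) : ℝ :=
  ((((i : ℕ) : ℝ) - ((j : ℕ) : ℝ)) * (((j : ℕ) : ℝ) - ((k : ℕ) : ℝ))
    * (((k : ℕ) : ℝ) - ((i : ℕ) : ℝ))) / 2

/-- vector cross product on ℝ³ -/
def cross (a b : Fin 3 → ℝ) : Fin 3 → ℝ := fun i => ∑ j, ∑ k, eps i j k * a j * b k

/-- partial derivative in the coordinate `x i` -/
def dx (f : Pt3 → ℝ) (i : Fin 3) (z : Pt3) : ℝ := fderiv ℝ f z (Pi.single i 1, 0)

/-- partial derivative in the coordinate `M i` (second group of coordinates) -/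
def dM (f : Pt3 → ℝ) (i : Fin 3) (z : Pt3) : ℝ := fderiv ℝ f z (0, Pi.single i 1)

/-- partial derivative of a function of `x` only -/
def dxg (g : (Fin 3 → ℝ) → ℝ) (i : Fin 3) (x : Fin 3 → ℝ) : ℝ := fderiv ℝ g x (Pi.single i 1)

/-- bracket associated with a skew-symmetric structure matrix π with
`π_{x_i x_j} = 0`, `π_{M_i x_j} = Axm i j`, `π_{M_i M_j} = Bmm i j`. -/
def piBracket (Axm Bmm : Fin 3 → Fin 3 → Pt3 → ℝ) (f h : Pt3 → ℝ) (z : Pt3) : ℝ :=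
  ∑ i, ∑ j,
    (dM f i z * Axm i j z * dx h j z - dx f j z * Axm i j z * dM h i z
      + dM f i z * Bmm i j z * dM h j z)

/-- angular velocity `ω = Â M` with `Â = diag â` -/
def omV (ah : Fin 3 → ℝ) (z : Pt3) : Fin 3 → ℝ := fun i => ah i * z.2 i

/-- Lagrange multiplier `λ = (Â M × M, Â x)/(Â x, x)` -/
def lamV (ah : Fin 3 → ℝ) (z : Pt3) : ℝ :=
  dot (cross (omV ah z) z.2) (fun i => ah i * z.1 i)
    / dot (fun i => ah i * z.1 i) z.1

/-- the Veselova vector field `Z(x,M) = (x × ω, M × ω + λ x)` -/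
def Zves (ah : Fin 3 → ℝ) (z : Pt3) : Pt3 :=
  (cross z.1 (omV ah z), fun i => cross z.2 (omV ah z) i + lamV ah z * z.1 i)

/-- `ĝ(x) = (x, Â x)^{1/2}` -/
def ghat (ah : Fin 3 → ℝ) (x : Fin 3 → ℝ) : ℝ :=
  Real.sqrt (dot x (fun i => ah i * x i))

/-! ### Auxiliary machinery for the proof -/

lemma eps_left0 (i k : Fin 3) : eps i i k = 0 := by simp [eps]

lemma eps_right0 (i j : Fin 3) : eps i j i = 0 := by simp [eps]

lemma eps_mid0 (i j : Fin 3) : eps i j j = 0 := by simp [eps]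

lemma sum_ite_left (i : Fin 3) (f : Fin 3 → Fin 3 → ℝ) :
    (∑ j, ∑ k, if j = i then f j k else 0) = ∑ k, f i k := by
  rw [Finset.sum_comm]
  simp [Finset.sum_ite_eq']

lemma sum_ite_right (i : Fin 3) (f : Fin 3 → Fin 3 → ℝ) :
    (∑ j, ∑ k, if k = i then f j k else 0) = ∑ j, f j i := by
  simp [Finset.sum_ite_eq']

/-- coordinate projection `x j` as a continuous linear map -/
def LXc (j : Fin 3) : Pt3 →L[ℝ] ℝ :=
  (ContinuousLinearMap.proj j).comp (ContinuousLinearMap.fst ℝ (Fin 3 → ℝ) (Fin 3 → ℝ))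

/-- coordinate projection `M j` as a continuous linear map -/
def LMc (j : Fin 3) : Pt3 →L[ℝ] ℝ :=
  (ContinuousLinearMap.proj j).comp (ContinuousLinearMap.snd ℝ (Fin 3 → ℝ) (Fin 3 → ℝ))

@[simp] lemma LXc_apply (j : Fin 3) (v : Pt3) : LXc j v = v.1 j := rfl
@[simp] lemma LMc_apply (j : Fin 3) (v : Pt3) : LMc j v = v.2 j := rfl

lemma hasLX (z : Pt3) (j : Fin 3) : HasFDerivAt (fun w : Pt3 => w.1 j) (LXc j) z :=
  (LXc j).hasFDerivAt

lemma hasLM (z : Pt3) (j : Fin 3) : HasFDerivAt (fun w : Pt3 => w.2 j) (LMc j) z :=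
  (LMc j).hasFDerivAt

/-- derivative of `S(x) = Σ xᵢ aᵢ xᵢ` -/
lemma exS (ah : Fin 3 → ℝ) (z : Pt3) :
    ∃ L : Pt3 →L[ℝ] ℝ, HasFDerivAt (fun w : Pt3 => ∑ j, w.1 j * (ah j * w.1 j)) L z ∧
      ∀ v : Pt3, L v = ∑ j, 2 * (ah j * z.1 j) * v.1 j := by
  refine ⟨_, HasFDerivAt.fun_sum (fun j _ => (hasLX z j).fun_mul ((hasLX z j).const_mul (ah j))),
    fun v => ?_⟩
  simp only [ContinuousLinearMap.sum_apply, ContinuousLinearMap.add_apply,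
    ContinuousLinearMap.smul_apply, LXc_apply, smul_eq_mul]
  exact Finset.sum_congr rfl fun j _ => by ring

/-- derivative of `S(x) = Σ (aᵢ xᵢ) xᵢ` (the other orientation) -/
lemma exSd (ah : Fin 3 → ℝ) (z : Pt3) :
    ∃ L : Pt3 →L[ℝ] ℝ, HasFDerivAt (fun w : Pt3 => ∑ j, (ah j * w.1 j) * w.1 j) L z ∧
      ∀ v : Pt3, L v = ∑ j, 2 * (ah j * z.1 j) * v.1 j := by
  refine ⟨_, HasFDerivAt.fun_sum (fun j _ => ((hasLX z j).const_mul (ah j)).fun_mul (hasLX z j)),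
    fun v => ?_⟩
  simp only [ContinuousLinearMap.sum_apply, ContinuousLinearMap.add_apply,
    ContinuousLinearMap.smul_apply, LXc_apply, smul_eq_mul]
  exact Finset.sum_congr rfl fun j _ => by ring

/-- derivative of `ĝ` -/
lemma exG (ah : Fin 3 → ℝ) (z : Pt3) (hz : (0:ℝ) < ∑ j, z.1 j * (ah j * z.1 j)) :
    ∃ L : Pt3 →L[ℝ] ℝ, HasFDerivAt (fun w : Pt3 => ghat ah w.1) L z ∧
      ∀ v : Pt3, L v =
        (∑ j, ah j * z.1 j * v.1 j) / Real.sqrt (∑ j, z.1 j * (ah j * z.1 j)) := by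
  obtain ⟨L, hL, hA⟩ := exS ah z
  have hs : Real.sqrt (∑ j, z.1 j * (ah j * z.1 j)) ≠ 0 :=
    (Real.sqrt_ne_zero'.mpr hz)
  refine ⟨_, hL.sqrt hz.ne', fun v => ?_⟩
  simp only [ContinuousLinearMap.smul_apply, smul_eq_mul, hA v]
  rw [Finset.mul_sum, Finset.sum_div]
  refine Finset.sum_congr rfl fun j _ => ?_
  field_simp

/-- derivative of `(x × ω)ᵢ` -/
lemma exC1 (ah : Fin 3 → ℝ) (z : Pt3) (i : Fin 3) :
    ∃ L : Pt3 →L[ℝ] ℝ, HasFDerivAt (fun w : Pt3 => cross w.1 (omV ah w) i) L z ∧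
      ∀ v : Pt3, L v = ∑ j, ∑ k,
        (eps i j k * v.1 j * (ah k * z.2 k) + eps i j k * z.1 j * (ah k * v.2 k)) := by
  refine ⟨_, HasFDerivAt.fun_sum (fun j _ => HasFDerivAt.fun_sum (fun k _ =>
    (((hasLX z j).const_mul (eps i j k)).fun_mul ((hasLM z k).const_mul (ah k))))),
    fun v => ?_⟩
  simp only [ContinuousLinearMap.sum_apply, ContinuousLinearMap.add_apply,
    ContinuousLinearMap.smul_apply, LXc_apply, LMc_apply, smul_eq_mul, omV]
  simp only [Fin.sum_univ_three]
  ring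

/-- derivative of `(M × ω)ᵢ` -/
lemma exC2 (ah : Fin 3 → ℝ) (z : Pt3) (i : Fin 3) :
    ∃ L : Pt3 →L[ℝ] ℝ, HasFDerivAt (fun w : Pt3 => cross w.2 (omV ah w) i) L z ∧
      ∀ v : Pt3, L v = ∑ j, ∑ k,
        (eps i j k * v.2 j * (ah k * z.2 k) + eps i j k * z.2 j * (ah k * v.2 k)) := by
  refine ⟨_, HasFDerivAt.fun_sum (fun j _ => HasFDerivAt.fun_sum (fun k _ =>
    (((hasLM z j).const_mul (eps i j k)).fun_mul ((hasLM z k).const_mul (ah k))))),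
    fun v => ?_⟩
  simp only [ContinuousLinearMap.sum_apply, ContinuousLinearMap.add_apply,
    ContinuousLinearMap.smul_apply, LXc_apply, LMc_apply, smul_eq_mul, omV]
  simp only [Fin.sum_univ_three]
  ring

/-- derivative of the numerator `N = (ω × M, Âx)` of `λ` -/
lemma exN (ah : Fin 3 → ℝ) (z : Pt3) :
    ∃ L : Pt3 →L[ℝ] ℝ,
      HasFDerivAt (fun w : Pt3 =>
        ∑ p, (∑ j, ∑ k, eps p j k * (ah j * w.2 j) * w.2 k) * (ah p * w.1 p)) L z ∧
      ∀ v : Pt3, L v = ∑ p,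
        ((∑ j, ∑ k, eps p j k * (ah j * z.2 j) * z.2 k) * (ah p * v.1 p)
          + (ah p * z.1 p) * (∑ j, ∑ k,
              (eps p j k * (ah j * z.2 j) * v.2 k + eps p j k * (ah j * v.2 j) * z.2 k))) := by
  refine ⟨_, HasFDerivAt.fun_sum (fun p _ =>
    (HasFDerivAt.fun_sum (fun j _ => HasFDerivAt.fun_sum (fun k _ =>
      (((hasLM z j).const_mul (ah j)).const_mul (eps p j k)).fun_mul (hasLM z k)))).fun_mul
      ((hasLX z p).const_mul (ah p))), fun v => ?_⟩
  simp only [ContinuousLinearMap.sum_apply, ContinuousLinearMap.add_apply,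
    ContinuousLinearMap.smul_apply, LXc_apply, LMc_apply, smul_eq_mul, omV]
  simp only [Fin.sum_univ_three]
  ring

/-- derivative of `λ` -/
lemma exLam (ah : Fin 3 → ℝ) (z : Pt3) (hz : (0:ℝ) < ∑ j, z.1 j * (ah j * z.1 j)) :
    ∃ L : Pt3 →L[ℝ] ℝ, HasFDerivAt (fun w : Pt3 => lamV ah w) L z ∧
      ∀ v : Pt3, L v =
        ((∑ p, (∑ j, ∑ k, eps p j k * (ah j * z.2 j) * z.2 k) * (ah p * z.1 p))
            * (-(((∑ j, (ah j * z.1 j) * z.1 j) ^ 2)⁻¹) * (∑ j, 2 * (ah j * z.1 j) * v.1 j))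
          + (∑ j, (ah j * z.1 j) * z.1 j)⁻¹ *
            (∑ p, ((∑ j, ∑ k, eps p j k * (ah j * z.2 j) * z.2 k) * (ah p * v.1 p)
              + (ah p * z.1 p) * (∑ j, ∑ k,
                (eps p j k * (ah j * z.2 j) * v.2 k
                  + eps p j k * (ah j * v.2 j) * z.2 k))))) := by
  obtain ⟨LN, hN, hNA⟩ := exN ah z
  obtain ⟨LS, hS, hSA⟩ := exSd ah z
  have hSd : (∑ j, (ah j * z.1 j) * z.1 j) ≠ 0 := by
    have : (∑ j, (ah j * z.1 j) * z.1 j) = ∑ j, z.1 j * (ah j * z.1 j) :=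
      Finset.sum_congr rfl fun j _ => mul_comm _ _
    rw [this]; exact hz.ne'
  have hInv : HasFDerivAt (fun w : Pt3 => (∑ j, (ah j * w.1 j) * w.1 j)⁻¹)
      ((-(((∑ j, (ah j * z.1 j) * z.1 j) ^ 2)⁻¹)) • LS) z :=
    (hasDerivAt_inv hSd).comp_hasFDerivAt z hS
  have heq : (fun w : Pt3 => lamV ah w) =
      (fun w : Pt3 => (∑ p, (∑ j, ∑ k, eps p j k * (ah j * w.2 j) * w.2 k) * (ah p * w.1 p))
        * (∑ j, (ah j * w.1 j) * w.1 j)⁻¹) := by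
    funext w
    simp only [lamV, dot, cross, omV, div_eq_mul_inv]
  have hfin := hN.fun_mul hInv
  rw [← heq] at hfin
  refine ⟨_, hfin, fun v => ?_⟩
  simp only [ContinuousLinearMap.add_apply, ContinuousLinearMap.smul_apply, smul_eq_mul,
    hNA v, hSA v]

set_option maxHeartbeats 1600000 in
lemma dx_val (ah : Fin 3 → ℝ) (z : Pt3) (i : Fin 3)
    (hz : (0:ℝ) < ∑ j, z.1 j * (ah j * z.1 j)) :
    dx (fun w => ghat ah w.1 * cross w.1 (omV ah w) i) i z =
      cross z.1 (omV ah z) i * (ah i * z.1 i)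
        / Real.sqrt (∑ j, z.1 j * (ah j * z.1 j)) := by
  obtain ⟨LG, hG, hGA⟩ := exG ah z hz
  obtain ⟨LC, hC, hCA⟩ := exC1 ah z i
  have hF : HasFDerivAt (fun w : Pt3 => ghat ah w.1 * cross w.1 (omV ah w) i)
      (ghat ah z.1 • LC + cross z.1 (omV ah z) i • LG) z := hG.mul hC
  rw [dx, hF.fderiv]
  have hs : Real.sqrt (∑ j, z.1 j * (ah j * z.1 j)) ≠ 0 := Real.sqrt_ne_zero'.mpr hz
  have hgz : ghat ah z.1 = Real.sqrt (∑ j, z.1 j * (ah j * z.1 j)) := rfl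
  simp only [ContinuousLinearMap.add_apply, ContinuousLinearMap.smul_apply, smul_eq_mul,
    hGA, hCA, Pi.single_apply, Pi.zero_apply, mul_zero, zero_mul, add_zero, zero_add,
    mul_ite, mul_one, ite_mul, Finset.sum_add_distrib, sum_ite_left, sum_ite_right,
    Finset.sum_ite_eq', Finset.mem_univ,
    if_true, eps_left0, eps_right0, eps_mid0, Finset.sum_const_zero, zero_div]
  ring

set_option maxHeartbeats 1600000 in
lemma dM_val (ah : Fin 3 → ℝ) (z : Pt3) (i : Fin 3)
    (hz : (0:ℝ) < ∑ j, z.1 j * (ah j * z.1 j)) :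
    dM (fun w => ghat ah w.1 *
        (cross w.2 (omV ah w) i + lamV ah w * w.1 i)) i z =
      z.1 i * (∑ p, (ah p * z.1 p) *
          ((∑ k, eps p i k * (ah i * z.2 k)) + ∑ j, eps p j i * (ah j * z.2 j)))
        / Real.sqrt (∑ j, z.1 j * (ah j * z.1 j)) := by
  obtain ⟨LG, hG, hGA⟩ := exG ah z hz
  obtain ⟨LC, hC, hCA⟩ := exC2 ah z i
  obtain ⟨LL, hL, hLA⟩ := exLam ah z hz
  have hrest : HasFDerivAt
      (fun w : Pt3 => cross w.2 (omV ah w) i + lamV ah w * w.1 i)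
      (LC + (lamV ah z • LXc i + z.1 i • LL)) z :=
    hC.add (hL.mul (hasLX z i))
  have hF : HasFDerivAt (fun w : Pt3 => ghat ah w.1 *
      (cross w.2 (omV ah w) i + lamV ah w * w.1 i))
      (ghat ah z.1 • (LC + (lamV ah z • LXc i + z.1 i • LL))
        + (cross z.2 (omV ah z) i + lamV ah z * z.1 i) • LG) z := hG.mul hrest
  rw [dM, hF.fderiv]
  have hs : Real.sqrt (∑ j, z.1 j * (ah j * z.1 j)) ≠ 0 := Real.sqrt_ne_zero'.mpr hz
  have hgz : ghat ah z.1 = Real.sqrt (∑ j, z.1 j * (ah j * z.1 j)) := rfl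
  have hsd : (∑ j, (ah j * z.1 j) * z.1 j)
      = Real.sqrt (∑ j, z.1 j * (ah j * z.1 j)) * Real.sqrt (∑ j, z.1 j * (ah j * z.1 j)) := by
    rw [Real.mul_self_sqrt hz.le]
    exact Finset.sum_congr rfl fun j _ => mul_comm _ _
  simp only [ContinuousLinearMap.add_apply, ContinuousLinearMap.smul_apply, smul_eq_mul,
    hGA, hCA, hLA, LXc_apply, Pi.single_apply, Pi.zero_apply, mul_zero, zero_mul, add_zero,
    zero_add, mul_ite, mul_one, ite_mul, Finset.sum_add_distrib, Finset.sum_ite_eq',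
    sum_ite_left, sum_ite_right,
    Finset.mem_univ, if_true, eps_left0, eps_right0, eps_mid0, Finset.sum_const_zero, zero_div]
  rw [hgz, hsd]
  simp only [cross, omV, Fin.sum_univ_three] at hs ⊢
  field_simp
  ring

set_option maxHeartbeats 1600000 in
theorem veselova_invariant_measure (ah : Fin 3 → ℝ) :
    ∀ z : Pt3, dot z.1 (fun i => ah i * z.1 i) > 0 →
      (∑ i, (dx (fun w => ghat ah w.1 * cross w.1 (omV ah w) i) i z
        + dM (fun w => ghat ah w.1 *
            (cross w.2 (omV ah w) i + lamV ah w * w.1 i)) i z)) = 0 := by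
  intro z hz
  have hz' : (0:ℝ) < ∑ j, z.1 j * (ah j * z.1 j) := hz
  have hs : Real.sqrt (∑ j, z.1 j * (ah j * z.1 j)) ≠ 0 := Real.sqrt_ne_zero'.mpr hz'
  have h0 : ((0 : Fin 3) : ℕ) = 0 := rfl
  have h1 : ((1 : Fin 3) : ℕ) = 1 := rfl
  have h2 : ((2 : Fin 3) : ℕ) = 2 := rfl
  simp only [Fin.sum_univ_three]
  rw [dx_val ah z 0 hz', dx_val ah z 1 hz', dx_val ah z 2 hz',
    dM_val ah z 0 hz', dM_val ah z 1 hz', dM_val ah z 2 hz']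
  simp only [cross, omV, Fin.sum_univ_three]
  norm_num [eps, h0, h1, h2]
  field_simp
  exact div_eq_zero_iff.mpr (Or.inl (by ring))
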